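/- (State propagation as marginalization: block matrix identity.) Let Σ̄ = fromBlocks(Σ_xx, Σ_xf, Σ_fx, Σ_ff) ∈ ℝ^{(d+p)×(d+p)} be symmetric positive definite with Σ_xx ∈ ℝ^{d×d}, and let Ω := Σ̄⁻¹ have the corresponding block decomposition Ω = fromBlocks(Ω_xx, Ω_xf, Ω_fx, Ω_ff). Let G ∈ ℝ^{d×d} be arbitrary and let Σ_w ∈ ℝ^{d×d} be symmetric positive definite. Then Ω_xx + GᵀΣ_w⁻¹G is invertible, and the matrix M := fromBlocks(Σ_w⁻¹, 0, 0, Ω_ff) − N·(Ω_xx + GᵀΣ_w⁻¹G)⁻¹·N′, where N ∈ ℝ^{(d+p)×d} is the vertical block [−Σ_w⁻¹G ; Ω_fx] and N′ ∈ ℝ^{d×(d+p)} is the horizontal block [−GᵀΣ_w⁻¹ Ω_xf], is invertible with M⁻¹ = fromBlocks(G Σ_xx Gᵀ + Σ_w, G Σ_xf, Σ_fx Gᵀ, Σ_ff). (This is exactly the EKF/MSCKF covariance propagation formula.) -/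

import Mathlib

open Matrix

lemma posDef_toBlocks₁₁ {d p : ℕ} {A : Matrix (Fin d) (Fin d) ℝ}
    {B : Matrix (Fin d) (Fin p) ℝ} {C : Matrix (Fin p) (Fin d) ℝ}
    {D : Matrix (Fin p) (Fin p) ℝ}
    (h : (fromBlocks A B C D).PosDef) : A.PosDef := by
  refine Matrix.PosDef.of_dotProduct_mulVec_pos ?_ ?_
  · have h1 : (fromBlocks A B C D)ᴴ = fromBlocks A B C D := h.isHermitian
    rw [Matrix.fromBlocks_conjTranspose, Matrix.fromBlocks_inj] at h1
    exact h1.1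
  · intro x hx
    have hx' : (Sum.elim x 0 : Fin d ⊕ Fin p → ℝ) ≠ 0 := by
      intro hcontra
      apply hx
      funext i
      exact congrFun hcontra (Sum.inl i)
    have := h.dotProduct_mulVec_pos hx'
    simpa [Matrix.fromBlocks_mulVec, Matrix.mulVec_zero, dotProduct] using this

theorem state_propagation_marginalization_identity
    {d p : ℕ}
    (Sigxx : Matrix (Fin d) (Fin d) ℝ) (Sigxf : Matrix (Fin d) (Fin p) ℝ)
    (Sigfx : Matrix (Fin p) (Fin d) ℝ) (Sigff : Matrix (Fin p) (Fin p) ℝ)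
    (hSigbar : (fromBlocks Sigxx Sigxf Sigfx Sigff).PosDef)
    (Omxx : Matrix (Fin d) (Fin d) ℝ) (Omxf : Matrix (Fin d) (Fin p) ℝ)
    (Omfx : Matrix (Fin p) (Fin d) ℝ) (Omff : Matrix (Fin p) (Fin p) ℝ)
    (hOm : (fromBlocks Sigxx Sigxf Sigfx Sigff)⁻¹ = fromBlocks Omxx Omxf Omfx Omff)
    (G : Matrix (Fin d) (Fin d) ℝ)
    (Sigw : Matrix (Fin d) (Fin d) ℝ) (hSigw : Sigw.PosDef)
    (N : Matrix (Fin d ⊕ Fin p) (Fin d) ℝ)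
    (hN : N = fromRows (-(Sigw⁻¹ * G)) Omfx)
    (N' : Matrix (Fin d) (Fin d ⊕ Fin p) ℝ)
    (hN' : N' = fromCols (-(Gᵀ * Sigw⁻¹)) Omxf)
    (M : Matrix (Fin d ⊕ Fin p) (Fin d ⊕ Fin p) ℝ)
    (hM : M = fromBlocks Sigw⁻¹ 0 0 Omff
      - N * (Omxx + Gᵀ * Sigw⁻¹ * G)⁻¹ * N') :
    IsUnit (Omxx + Gᵀ * Sigw⁻¹ * G) ∧
    IsUnit M ∧
    M⁻¹ = fromBlocks (G * Sigxx * Gᵀ + Sigw) (G * Sigxf) (Sigfx * Gᵀ) Sigff := by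
  set W := Sigw⁻¹ with hWdef
  have hWpd : W.PosDef := hSigw.inv
  have hWS : W * Sigw = 1 := Matrix.nonsing_inv_mul _ hSigw.det_pos.ne'.isUnit
  -- Omxx posdef
  have hOmPD : (fromBlocks Omxx Omxf Omfx Omff).PosDef := hOm ▸ hSigbar.inv
  have hOmxx : Omxx.PosDef := posDef_toBlocks₁₁ hOmPD
  have hGWG : (Gᵀ * W * G).PosSemidef := by
    have := hWpd.posSemidef.conjTranspose_mul_mul_same G
    simpa using this
  have hApd : (Omxx + Gᵀ * W * G).PosDef := hOmxx.add_posSemidef hGWG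
  set A := Omxx + Gᵀ * W * G with hAdef
  set B := A⁻¹ with hBdef
  have hBA : B * A = 1 := Matrix.nonsing_inv_mul _ hApd.det_pos.ne'.isUnit
  -- key cancellation lemma
  have key : ∀ {m : Type} [Fintype m] (X : Matrix (Fin d) m ℝ),
      B * (Omxx * X) + B * (Gᵀ * (W * (G * X))) = X := by
    intro m _ X
    have h := congrArg (fun Y => Y * X) hBA
    simp only [Matrix.one_mul] at h
    rw [Matrix.mul_assoc, hAdef] at h
    simp only [Matrix.add_mul, Matrix.mul_add, Matrix.mul_assoc] at h
    exact h
  -- block identities from Ω Σ = 1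
  have hprod : fromBlocks Omxx Omxf Omfx Omff * fromBlocks Sigxx Sigxf Sigfx Sigff = 1 := by
    rw [← hOm]
    exact Matrix.nonsing_inv_mul _ hSigbar.det_pos.ne'.isUnit
  rw [Matrix.fromBlocks_multiply, ← Matrix.fromBlocks_one, Matrix.fromBlocks_inj] at hprod
  obtain ⟨e1, e2, e3, e4⟩ := hprod
  have e2' : Omxf * Sigff = -(Omxx * Sigxf) := by
    rw [eq_neg_iff_add_eq_zero, add_comm]; exact e2
  have e1g : Omxf * (Sigfx * Gᵀ) = Gᵀ + -(Omxx * (Sigxx * Gᵀ)) := by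
    have h := congrArg (fun Y => Y * Gᵀ) e1
    simp only [Matrix.add_mul, Matrix.mul_assoc, Matrix.one_mul] at h
    rw [eq_add_neg_iff_add_eq, add_comm]; exact h
  have e3g : Omfx * (Sigxx * Gᵀ) + Omff * (Sigfx * Gᵀ) = 0 := by
    have h := congrArg (fun Y => Y * Gᵀ) e3
    simp only [Matrix.add_mul, Matrix.mul_assoc, Matrix.zero_mul] at h
    exact h
  -- M in explicit block form
  have hMb : M = fromBlocks (W - W * G * B * (Gᵀ * W)) (W * G * B * Omxf)
      (Omfx * B * (Gᵀ * W)) (Omff - Omfx * B * Omxf) := by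
    rw [hM, hN, hN', Matrix.fromRows_mul, Matrix.fromRows_mul_fromCols,
      sub_eq_add_neg, Matrix.fromBlocks_neg, Matrix.fromBlocks_add, Matrix.fromBlocks_inj]
    refine ⟨?_, ?_, ?_, ?_⟩ <;>
      simp only [Matrix.neg_mul, Matrix.mul_neg, neg_neg, Matrix.mul_assoc] <;> abel
  set P := fromBlocks (G * Sigxx * Gᵀ + Sigw) (G * Sigxf) (Sigfx * Gᵀ) Sigff with hPdef
  have hMP : M * P = 1 := by
    rw [hMb, hPdef, Matrix.fromBlocks_multiply, ← Matrix.fromBlocks_one,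
      Matrix.fromBlocks_inj]
    refine ⟨?_, ?_, ?_, ?_⟩
    · calc (W - W * G * B * (Gᵀ * W)) * (G * Sigxx * Gᵀ + Sigw)
            + W * G * B * Omxf * (Sigfx * Gᵀ)
          = 1 + W * (G * (Sigxx * Gᵀ))
            - W * (G * (B * (Omxx * (Sigxx * Gᵀ)) + B * (Gᵀ * (W * (G * (Sigxx * Gᵀ)))))) := by
            simp only [Matrix.mul_add, Matrix.add_mul, Matrix.sub_mul, Matrix.mul_sub,
              Matrix.neg_mul, Matrix.mul_neg, Matrix.mul_assoc, hWS, Matrix.mul_one, e1g]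
            abel
        _ = 1 + W * (G * (Sigxx * Gᵀ)) - W * (G * (Sigxx * Gᵀ)) := by rw [key (Sigxx * Gᵀ)]
        _ = 1 := by abel
    · calc (W - W * G * B * (Gᵀ * W)) * (G * Sigxf) + W * G * B * Omxf * Sigff
          = W * (G * Sigxf)
            - W * (G * (B * (Omxx * Sigxf) + B * (Gᵀ * (W * (G * Sigxf))))) := by
            simp only [Matrix.mul_add, Matrix.add_mul, Matrix.sub_mul, Matrix.mul_sub,
              Matrix.neg_mul, Matrix.mul_neg, Matrix.mul_assoc, e2']
            abel
        _ = W * (G * Sigxf) - W * (G * Sigxf) := by rw [key Sigxf]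
        _ = 0 := sub_self _
    · calc Omfx * B * (Gᵀ * W) * (G * Sigxx * Gᵀ + Sigw)
            + (Omff - Omfx * B * Omxf) * (Sigfx * Gᵀ)
          = Omfx * (B * (Omxx * (Sigxx * Gᵀ)) + B * (Gᵀ * (W * (G * (Sigxx * Gᵀ)))))
            + Omff * (Sigfx * Gᵀ) := by
            simp only [Matrix.mul_add, Matrix.add_mul, Matrix.sub_mul, Matrix.mul_sub,
              Matrix.neg_mul, Matrix.mul_neg, Matrix.mul_assoc, hWS, Matrix.mul_one, e1g]
            abel
        _ = Omfx * (Sigxx * Gᵀ) + Omff * (Sigfx * Gᵀ) := by rw [key (Sigxx * Gᵀ)]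
        _ = 0 := e3g
    · calc Omfx * B * (Gᵀ * W) * (G * Sigxf) + (Omff - Omfx * B * Omxf) * Sigff
          = Omfx * (B * (Omxx * Sigxf) + B * (Gᵀ * (W * (G * Sigxf)))) + Omff * Sigff := by
            simp only [Matrix.mul_add, Matrix.add_mul, Matrix.sub_mul, Matrix.mul_sub,
              Matrix.neg_mul, Matrix.mul_neg, Matrix.mul_assoc, e2']
            abel
        _ = Omfx * Sigxf + Omff * Sigff := by rw [key Sigxf]
        _ = 1 := e4
  have hMunit : IsUnit M := (Matrix.isUnit_iff_isUnit_det M).mpr (Matrix.isUnit_det_of_right_inverse hMP)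
  exact ⟨hApd.isUnit, hMunit, Matrix.inv_eq_right_inv hMP⟩
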